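/- If GL does not prove A and GL does not prove ⋀Rf(□A) → ¬□A, then there is a transitive irreflexive Kripke model with root r* such that r* forces ◇^n⊤ for all n, r* forces □□A, and r* does not force □A. Consequently GL_ω does not prove □□A → □A. -/

import Mathlib

/-- Modal propositional formulas (variables are indexed by `ℕ`). -/
inductive MF : Type
  | var : ℕ → MF
  | fal : MF
  | imp : MF → MF → MF
  | box : MF → MF
deriving DecidableEq

namespace MF

def neg (A : MF) : MF := imp A fal
def top : MF := neg fal
def conj (A B : MF) : MF := neg (imp A (neg B))
def disj (A B : MF) : MF := imp (neg A) B
def biimp (A B : MF) : MF := conj (imp A B) (imp B A)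
def dia (A : MF) : MF := neg (box (neg A))
def boxn : ℕ → MF → MF
  | 0, A => A
  | n+1, A => box (boxn n A)
def dian (n : ℕ) (A : MF) : MF := neg (boxn n (neg A))

/-- Uniform substitution. -/
def subst (s : ℕ → MF) : MF → MF
  | var n => s n
  | fal => fal
  | imp A B => imp (subst s A) (subst s B)
  | box A => box (subst s A)

/-- The set of subformulas. -/
def subF : MF → Finset MF
  | var n => {var n}
  | fal => {fal}
  | imp A B => insert (imp A B) (subF A ∪ subF B)
  | box A => insert (box A) (subF A)

def isBox : MF → Bool
  | box _ => true
  | _ => false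

def unbox : MF → MF
  | box A => A
  | A => A

/-- `cx A` is the number of subformulas of `A` of the form `□C`. -/
def cx (A : MF) : ℕ := ((subF A).filter (fun B => isBox B = true)).card

/-- `Rf(A) = {□B → B : □B ∈ Sub(A)}`. -/
def RfSet (A : MF) : Finset MF :=
  ((subF A).filter (fun B => isBox B = true)).image (fun B => imp B (unbox B))

/-- Conjunction of a finite set of formulas. -/
noncomputable def conjFin (s : Finset MF) : MF := s.toList.foldr conj top

/-- `A` is an instance of a propositional tautology. -/
def TautInst (A : MF) : Prop :=
  ∀ v : MF → Bool, (∀ B C, v (imp B C) = (!(v B) || v C)) → v fal = false → v A = true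

end MF

/-- Provability in the Gödel–Löb logic GL. -/
inductive GLPrv : MF → Prop
  | taut {A} : MF.TautInst A → GLPrv A
  | k (A B : MF) : GLPrv (MF.imp (MF.box (MF.imp A B)) (MF.imp (MF.box A) (MF.box B)))
  | lob (A : MF) : GLPrv (MF.imp (MF.box (MF.imp (MF.box A) A)) (MF.box A))
  | mp {A B} : GLPrv (MF.imp A B) → GLPrv A → GLPrv B
  | nec {A} : GLPrv A → GLPrv (MF.box A)

/-- Provability in GL + Γ: axioms are GL-theorems and substitution instances of
formulas in Γ; rules are modus ponens (and substitution, built into the axiom rule). -/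
inductive ExtPrv (Ax : Set MF) : MF → Prop
  | gl {A} : GLPrv A → ExtPrv Ax A
  | ax {A} (s : ℕ → MF) : A ∈ Ax → ExtPrv Ax (A.subst s)
  | mp {A B} : ExtPrv Ax (MF.imp A B) → ExtPrv Ax A → ExtPrv Ax B

/-- GL_ω = GL + {◇ⁿ⊤ : n ∈ ω}. -/
def GLomegaPrv : MF → Prop := ExtPrv (Set.range fun n => MF.dian n MF.top)

/-- GLS = GL + {□p → p}. -/
def GLSPrv : MF → Prop := ExtPrv {MF.imp (MF.box (MF.var 0)) (MF.var 0)}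

/-- F_s = □^{s+1}⊥ → □^s⊥. -/
def Fmla (s : ℕ) : MF := MF.imp (MF.boxn (s+1) MF.fal) (MF.boxn s MF.fal)

/-- GL + {¬F_s}. -/
def GLFPrv (s : ℕ) : MF → Prop := ExtPrv {MF.neg (Fmla s)}

/-- A Kripke model for modal logic. -/
structure KModel where
  W : Type
  R : W → W → Prop
  val : W → ℕ → Prop

/-- The forcing relation. -/
def KModel.force (M : KModel) : M.W → MF → Prop
  | w, MF.var n => M.val w n
  | _, MF.fal => False
  | w, MF.imp A B => M.force w A → M.force w B
  | w, MF.box A => ∀ v, M.R w v → M.force v A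

namespace MFAux

open MF

lemma mem_subF_self (A : MF) : A ∈ MF.subF A := by
  cases A <;> simp [MF.subF]

lemma subF_closed : ∀ A B : MF, B ∈ MF.subF A → MF.subF B ⊆ MF.subF A := by
  intro A
  induction A with
  | var n => intro B hB; simp [MF.subF] at hB; subst hB; simp [MF.subF]
  | fal => intro B hB; simp [MF.subF] at hB; subst hB; simp [MF.subF]
  | imp C D ihC ihD =>
      intro B hB
      simp [MF.subF] at hB
      rcases hB with hB | hB | hB
      · subst hB; exact fun x hx => hx
      · intro x hx
        have := ihC B hB hx
        simp [MF.subF]; right; left; exact this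
      · intro x hx
        have := ihD B hB hx
        simp [MF.subF]; right; right; exact this
  | box C ihC =>
      intro B hB
      simp [MF.subF] at hB
      rcases hB with hB | hB
      · subst hB; exact fun x hx => hx
      · intro x hx
        have := ihC B hB hx
        simp [MF.subF]; right; exact this

end MFAux
namespace MFAux

/-- Tactic-friendly tautology proofs. -/
lemma taut_aa (A : MF) : GLPrv (MF.imp A A) :=
  GLPrv.taut (by intro v h hf; simp only [h]; cases v A <;> rfl)

lemma taut_weak (A B : MF) : GLPrv (MF.imp B (MF.imp A B)) :=
  GLPrv.taut (by intro v h hf; simp only [h]; cases v A <;> cases v B <;> rfl)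

lemma prv_weak {B : MF} (A : MF) (h : GLPrv B) : GLPrv (MF.imp A B) :=
  GLPrv.mp (taut_weak A B) h

lemma taut_trans (A B C : MF) :
    GLPrv (MF.imp (MF.imp A B) (MF.imp (MF.imp B C) (MF.imp A C))) :=
  GLPrv.taut (by intro v h hf; simp only [h]; cases v A <;> cases v B <;> cases v C <;> rfl)

lemma prv_trans {A B C : MF} (h1 : GLPrv (MF.imp A B)) (h2 : GLPrv (MF.imp B C)) :
    GLPrv (MF.imp A C) :=
  GLPrv.mp (GLPrv.mp (taut_trans A B C) h1) h2

lemma taut_top (A : MF) : GLPrv (MF.imp A MF.top) :=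
  GLPrv.taut (by intro v h hf; simp only [MF.top, MF.neg, h, hf]; cases v A <;> rfl)

lemma prv_top : GLPrv MF.top :=
  GLPrv.taut (by intro v h hf; simp only [MF.top, MF.neg, h, hf]; rfl)

lemma taut_conj_intro (C A B : MF) :
    GLPrv (MF.imp (MF.imp C A) (MF.imp (MF.imp C B) (MF.imp C (MF.conj A B)))) :=
  GLPrv.taut (by
    intro v h hf; simp only [MF.conj, MF.neg, h, hf]
    cases v A <;> cases v B <;> cases v C <;> rfl)

lemma prv_conj_intro {C A B : MF} (h1 : GLPrv (MF.imp C A)) (h2 : GLPrv (MF.imp C B)) :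
    GLPrv (MF.imp C (MF.conj A B)) :=
  GLPrv.mp (GLPrv.mp (taut_conj_intro C A B) h1) h2

lemma taut_conj_left (A B : MF) : GLPrv (MF.imp (MF.conj A B) A) :=
  GLPrv.taut (by
    intro v h hf; simp only [MF.conj, MF.neg, h, hf]
    cases v A <;> cases v B <;> rfl)

lemma taut_conj_right (A B : MF) : GLPrv (MF.imp (MF.conj A B) B) :=
  GLPrv.taut (by
    intro v h hf; simp only [MF.conj, MF.neg, h, hf]
    cases v A <;> cases v B <;> rfl)

lemma taut_mp2 (X A B : MF) :
    GLPrv (MF.imp (MF.imp X (MF.imp A B)) (MF.imp (MF.imp X A) (MF.imp X B))) :=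
  GLPrv.taut (by
    intro v h hf; simp only [h]
    cases v X <;> cases v A <;> cases v B <;> rfl)

lemma prv_mp2 {X A B : MF} (h1 : GLPrv (MF.imp X (MF.imp A B))) (h2 : GLPrv (MF.imp X A)) :
    GLPrv (MF.imp X B) :=
  GLPrv.mp (GLPrv.mp (taut_mp2 X A B) h1) h2

/-- list conjunction -/
def listConj (l : List MF) : MF := l.foldr MF.conj MF.top

lemma conjFin_eq (s : Finset MF) : MF.conjFin s = listConj s.toList := rfl

lemma listConj_mem {x : MF} : ∀ {l : List MF}, x ∈ l → GLPrv (MF.imp (listConj l) x) := by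
  intro l
  induction l with
  | nil => intro h; simp at h
  | cons a l ih =>
      intro h
      rcases List.mem_cons.1 h with h | h
      · subst h; exact taut_conj_left _ _
      · exact prv_trans (taut_conj_right a (listConj l)) (ih h)

lemma listConj_sub : ∀ (l₂ l₁ : List MF), (∀ x ∈ l₂, x ∈ l₁) →
    GLPrv (MF.imp (listConj l₁) (listConj l₂)) := by
  intro l₂
  induction l₂ with
  | nil => intro l₁ _; exact taut_top _
  | cons a l ih =>
      intro l₁ h
      exact prv_conj_intro (listConj_mem (h a (by simp)))
        (ih l₁ (fun x hx => h x (by simp [hx])))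

/-- Derivability from a finite set of hypotheses. -/
def Der (s : Finset MF) (B : MF) : Prop := GLPrv (MF.imp (MF.conjFin s) B)

lemma Der_mono {s t : Finset MF} {B : MF} (hst : s ⊆ t) (h : Der s B) : Der t B := by
  refine prv_trans ?_ h
  exact listConj_sub _ _ (fun x hx => by
    simp only [Finset.mem_toList] at *; exact hst hx)

lemma Der_mem {s : Finset MF} {B : MF} (h : B ∈ s) : Der s B :=
  listConj_mem (by simpa using h)

lemma Der_mp {s : Finset MF} {B C : MF} (h1 : Der s (MF.imp B C)) (h2 : Der s B) : Der s C :=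
  prv_mp2 h1 h2

lemma Der_taut {s : Finset MF} {B C : MF} (h1 : GLPrv (MF.imp B C)) (h2 : Der s B) : Der s C :=
  prv_trans h2 h1

lemma Der_prv {s : Finset MF} {B : MF} (h : GLPrv B) : Der s B := prv_weak _ h

lemma Der_insert_iff {s : Finset MF} {x B : MF} :
    Der (insert x s) B ↔ Der s (MF.imp x B) := by
  constructor
  · intro h
    have h2 : GLPrv (MF.imp (listConj (x :: s.toList)) (listConj (insert x s).toList)) := by
      refine listConj_sub _ _ ?_
      intro y hy
      simp only [Finset.mem_toList, Finset.mem_insert] at hy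
      rcases hy with hy | hy
      · subst hy; simp
      · simp [hy]
    have h3 : GLPrv (MF.imp (MF.conj x (MF.conjFin s)) B) := prv_trans h2 h
    -- now curry
    have h4 : GLPrv (MF.imp (MF.imp (MF.conj x (MF.conjFin s)) B)
        (MF.imp (MF.conjFin s) (MF.imp x B))) :=
      GLPrv.taut (by
        intro v h hf; simp only [MF.conj, MF.neg, h, hf]
        cases v x <;> cases v (MF.conjFin s) <;> cases v B <;> rfl)
    exact GLPrv.mp h4 h3
  · intro h
    have h1 : Der (insert x s) (MF.imp x B) := Der_mono (Finset.subset_insert _ _) h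
    exact Der_mp h1 (Der_mem (Finset.mem_insert_self _ _))

/-- Consistency. -/
def Con (s : Finset MF) : Prop := ¬ Der s MF.fal

end MFAux
namespace MFAux

/-- K as a rule. -/
lemma prv_K {A B : MF} (h : GLPrv (MF.imp A B)) : GLPrv (MF.imp (MF.box A) (MF.box B)) :=
  GLPrv.mp (GLPrv.k A B) (GLPrv.nec h)

lemma prv_boxConj (A B : MF) :
    GLPrv (MF.imp (MF.conj (MF.box A) (MF.box B)) (MF.box (MF.conj A B))) := by
  have h1 : GLPrv (MF.imp A (MF.imp B (MF.conj A B))) :=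
    GLPrv.taut (by
      intro v h hf; simp only [MF.conj, MF.neg, h, hf]
      cases v A <;> cases v B <;> rfl)
  have h2 : GLPrv (MF.imp (MF.box A) (MF.box (MF.imp B (MF.conj A B)))) := prv_K h1
  have h3 : GLPrv (MF.imp (MF.box (MF.imp B (MF.conj A B)))
      (MF.imp (MF.box B) (MF.box (MF.conj A B)))) := GLPrv.k _ _
  have h4 : GLPrv (MF.imp (MF.box A) (MF.imp (MF.box B) (MF.box (MF.conj A B)))) :=
    prv_trans h2 h3
  have h5 := prv_mp2 (X := MF.conj (MF.box A) (MF.box B))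
    (prv_trans (taut_conj_left (MF.box A) (MF.box B)) h4)
    (taut_conj_right (MF.box A) (MF.box B))
  exact h5

/-- If `C` implies `□x` for each `x ∈ l`, then `C` implies `□⋀l`. -/
lemma prv_box_listConj {C : MF} : ∀ (l : List MF), (∀ x ∈ l, GLPrv (MF.imp C (MF.box x))) →
    GLPrv (MF.imp C (MF.box (listConj l))) := by
  intro l
  induction l with
  | nil => intro _; exact prv_weak _ (GLPrv.nec prv_top)
  | cons a l ih =>
      intro h
      have ha := h a (by simp)
      have hl := ih (fun x hx => h x (by simp [hx]))
      have : GLPrv (MF.imp C (MF.conj (MF.box a) (MF.box (listConj l)))) :=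
        prv_conj_intro ha hl
      exact prv_trans this (prv_boxConj _ _)

lemma taut_four_aux (P Q R : MF) :
    GLPrv (MF.imp (MF.imp Q R) (MF.imp P (MF.imp Q (MF.conj P R)))) :=
  GLPrv.taut (by
    intro v h hf; simp only [MF.conj, MF.neg, h, hf]
    cases v P <;> cases v Q <;> cases v R <;> rfl)

/-- GL ⊢ □A → □□A. -/
lemma prv_four (A : MF) : GLPrv (MF.imp (MF.box A) (MF.box (MF.box A))) := by
  have hB : MF.conj A (MF.box A) = MF.conj A (MF.box A) := rfl
  have hKB : GLPrv (MF.imp (MF.box (MF.conj A (MF.box A))) (MF.box A)) :=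
    prv_K (taut_conj_left _ _)
  have h1 : GLPrv (MF.imp A (MF.imp (MF.box (MF.conj A (MF.box A)))
      (MF.conj A (MF.box A)))) :=
    GLPrv.mp (taut_four_aux A (MF.box (MF.conj A (MF.box A))) (MF.box A)) hKB
  have h2 := prv_K h1
  have h3 : GLPrv (MF.imp (MF.box A) (MF.box (MF.conj A (MF.box A)))) :=
    prv_trans h2 (GLPrv.lob (MF.conj A (MF.box A)))
  exact prv_trans h3 (prv_K (taut_conj_right _ _))

end MFAux
namespace MFAux

def MaxCon (P m : Finset MF) : Prop :=
  m ⊆ P ∧ Con m ∧ ∀ C ∈ P, C ∉ m → ¬ Con (insert C m)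

lemma lindenbaum_aux (P : Finset MF) :
    ∀ n (s : Finset MF), s ⊆ P → Con s → P.card - s.card ≤ n →
    ∃ m, s ⊆ m ∧ MaxCon P m := by
  intro n
  induction n with
  | zero =>
      intro s hs hc hcard
      have : s = P := Finset.eq_of_subset_of_card_le hs (by omega)
      subst this
      exact ⟨s, subset_rfl, hs, hc, fun C hC hCm _ => hCm hC⟩
  | succ n ih =>
      intro s hs hc hcard
      by_cases hex : ∃ C ∈ P, C ∉ s ∧ Con (insert C s)
      · obtain ⟨C, hCP, hCs, hCcon⟩ := hex
        have hcard' : s.card < (insert C s).card := by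
          rw [Finset.card_insert_of_notMem hCs]; omega
        obtain ⟨m, hm1, hm2⟩ := ih (insert C s) (Finset.insert_subset hCP hs) hCcon
          (by
            have h1 : (insert C s).card ≤ P.card :=
              Finset.card_le_card (Finset.insert_subset hCP hs)
            omega)
        exact ⟨m, (Finset.subset_insert _ _).trans hm1, hm2⟩
      · push_neg at hex
        exact ⟨s, subset_rfl, hs, hc, fun C hC hCm => hex C hC hCm⟩

lemma lindenbaum {P s : Finset MF} (hs : s ⊆ P) (hc : Con s) :
    ∃ m, s ⊆ m ∧ MaxCon P m :=
  lindenbaum_aux P (P.card - s.card) s hs hc le_rfl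

lemma maxcon_mem_of_der {P m : Finset MF} (hm : MaxCon P m) {B : MF}
    (hBP : B ∈ P) (hd : Der m B) : B ∈ m := by
  by_contra hBm
  apply hm.2.2 B hBP hBm
  intro hfal
  apply hm.2.1
  have := Der_insert_iff.1 hfal
  exact Der_mp this hd

lemma maxcon_fal_not_mem {P m : Finset MF} (hm : MaxCon P m) : MF.fal ∉ m := by
  intro h
  exact hm.2.1 (Der_mem h)

lemma maxcon_not_both {P m : Finset MF} (hm : MaxCon P m) {B : MF}
    (h1 : B ∈ m) (h2 : MF.neg B ∈ m) : False := by
  apply hm.2.1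
  exact Der_mp (Der_mem h2) (Der_mem h1)

lemma maxcon_neg_mem {P m : Finset MF} (hm : MaxCon P m) {B : MF}
    (hBP : B ∈ P) (hnBP : MF.neg B ∈ P) (hBm : B ∉ m) : MF.neg B ∈ m := by
  have h1 := hm.2.2 B hBP hBm
  have h2 : Der m (MF.neg B) := by
    have : Der (insert B m) MF.fal := by
      by_contra hcon
      exact h1 hcon
    exact Der_insert_iff.1 this
  exact maxcon_mem_of_der hm hnBP h2

/-! ### Canonical model for GL over the finite closure of a formula `G` -/

def PhiP (G : MF) : Finset MF := insert MF.fal (MF.subF G ∪ (MF.subF G).image MF.neg)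

lemma sub_mem_PhiP {G B : MF} (h : B ∈ MF.subF G) : B ∈ PhiP G := by
  simp [PhiP]; right; left; exact h

lemma neg_mem_PhiP {G B : MF} (h : B ∈ MF.subF G) : MF.neg B ∈ PhiP G := by
  simp [PhiP]; right; right; exact ⟨B, h, rfl⟩

lemma fal_mem_PhiP (G : MF) : MF.fal ∈ PhiP G := by simp [PhiP]

lemma box_mem_subF_of_PhiP {G B : MF} (h : MF.box B ∈ PhiP G) : MF.box B ∈ MF.subF G := by
  simp only [PhiP, Finset.mem_insert, Finset.mem_union, Finset.mem_image] at h
  rcases h with h | h | ⟨C, _, h⟩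
  · exact absurd h (by simp)
  · exact h
  · exact absurd h (by simp [MF.neg])

lemma imp_mem_PhiP_components {G C D : MF} (h : MF.imp C D ∈ PhiP G) :
    C ∈ MF.subF G ∧ D ∈ PhiP G := by
  simp only [PhiP, Finset.mem_insert, Finset.mem_union, Finset.mem_image] at h
  rcases h with h | h | ⟨E, hE, h⟩
  · exact absurd h (by simp)
  · have hC : C ∈ MF.subF (MF.imp C D) := by
      simp [MF.subF]; right; left; exact mem_subF_self C
    have hD : D ∈ MF.subF (MF.imp C D) := by
      simp [MF.subF]; right; right; exact mem_subF_self D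
    exact ⟨subF_closed G _ h hC, sub_mem_PhiP (subF_closed G _ h hD)⟩
  · simp only [MF.neg, MF.imp.injEq] at h
    obtain ⟨h1, h2⟩ := h
    subst h1; subst h2
    exact ⟨hE, fal_mem_PhiP G⟩

lemma sub_of_box_subF {G B : MF} (h : MF.box B ∈ MF.subF G) : B ∈ MF.subF G := by
  have : B ∈ MF.subF (MF.box B) := by simp [MF.subF]; right; exact mem_subF_self B
  exact subF_closed G _ h this

def CWorld (G : MF) : Type := {m : Finset MF // MaxCon (PhiP G) m}

def canR (G : MF) (m m' : CWorld G) : Prop :=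
  (∀ C, MF.box C ∈ m.1 → C ∈ m'.1 ∧ MF.box C ∈ m'.1) ∧
  ∃ C, MF.box C ∈ m'.1 ∧ MF.box C ∉ m.1

def canM (G : MF) : KModel := ⟨CWorld G, canR G, fun m n => MF.var n ∈ m.1⟩

lemma canR_trans (G : MF) : Transitive (canR G) := by
  rintro a b c ⟨hab, _⟩ ⟨hbc, C, hC1, hC2⟩
  refine ⟨fun D hD => hbc D (hab D hD).2, C, hC1, fun hCa => hC2 (hab C hCa).2⟩

lemma canR_irrefl (G : MF) : Irreflexive (canR G) := by
  rintro a ⟨_, C, h1, h2⟩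
  exact h2 h1

lemma isBox_exists {x : MF} (h : MF.isBox x = true) : ∃ C, x = MF.box C := by
  cases x <;> simp [MF.isBox] at h ⊢

/-- Key step of the truth lemma: find a successor refuting `B`. -/
lemma exists_successor {G : MF} (m : CWorld G) {B : MF} (hB : MF.box B ∈ MF.subF G)
    (hnot : MF.box B ∉ m.1) : ∃ m' : CWorld G, canR G m m' ∧ B ∉ m'.1 := by
  classical
  set s0 : Finset MF := m.1.filter (fun C => MF.isBox C) with hs0
  set u : Finset MF := s0.image MF.unbox with hu
  set T : Finset MF := s0 ∪ u with hT
  set S0 : Finset MF := insert (MF.box B) (insert (MF.neg B) T) with hS0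
  have hBsub : B ∈ MF.subF G := sub_of_box_subF hB
  -- S0 ⊆ PhiP G
  have hS0sub : S0 ⊆ PhiP G := by
    intro x hx
    simp only [hS0, Finset.mem_insert] at hx
    rcases hx with hx | hx | hx
    · subst hx; exact sub_mem_PhiP hB
    · subst hx; exact neg_mem_PhiP hBsub
    · simp only [hT, Finset.mem_union] at hx
      rcases hx with hx | hx
      · exact m.2.1 (Finset.mem_filter.1 hx).1
      · simp only [hu, Finset.mem_image] at hx
        obtain ⟨y, hy, hxy⟩ := hx
        obtain ⟨hym, hybox⟩ := Finset.mem_filter.1 hy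
        obtain ⟨C, rfl⟩ := isBox_exists hybox
        have : MF.box C ∈ MF.subF G := box_mem_subF_of_PhiP (m.2.1 hym)
        subst hxy
        exact sub_mem_PhiP (sub_of_box_subF this)
  -- consistency of S0
  have hcon : Con S0 := by
    intro hder
    rw [hS0] at hder
    have h1 : Der (insert (MF.neg B) T) (MF.imp (MF.box B) MF.fal) :=
      Der_insert_iff.1 hder
    have h2 : Der T (MF.imp (MF.neg B) (MF.imp (MF.box B) MF.fal)) :=
      Der_insert_iff.1 h1
    -- clean up: Der T (□B → B)
    have h3 : Der T (MF.imp (MF.box B) B) := by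
      refine Der_taut ?_ h2
      exact GLPrv.taut (by
        intro v h hf; simp only [MF.neg, h, hf]
        cases v B <;> cases v (MF.box B) <;> rfl)
    have h4 : GLPrv (MF.imp (MF.box (MF.conjFin T)) (MF.box (MF.imp (MF.box B) B))) :=
      prv_K h3
    have h5 : GLPrv (MF.imp (MF.box (MF.conjFin T)) (MF.box B)) :=
      prv_trans h4 (GLPrv.lob B)
    have h6 : GLPrv (MF.imp (MF.conjFin s0) (MF.box (MF.conjFin T))) := by
      refine prv_box_listConj _ ?_
      intro x hx
      rw [Finset.mem_toList] at hx
      simp only [hT, Finset.mem_union] at hx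
      rcases hx with hx | hx
      · obtain ⟨C, rfl⟩ := isBox_exists (Finset.mem_filter.1 hx).2
        exact prv_trans (Der_mem hx) (prv_four C)
      · simp only [hu, Finset.mem_image] at hx
        obtain ⟨y, hy, hxy⟩ := hx
        obtain ⟨C, rfl⟩ := isBox_exists (Finset.mem_filter.1 hy).2
        subst hxy
        exact Der_mem hy
    have h7 : Der s0 (MF.box B) := prv_trans h6 h5
    have h8 : Der m.1 (MF.box B) := Der_mono (Finset.filter_subset _ _) h7
    exact hnot (maxcon_mem_of_der m.2 (sub_mem_PhiP hB) h8)
  obtain ⟨m', hsub, hmax⟩ := lindenbaum hS0sub hcon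
  have hboxB : MF.box B ∈ m' := hsub (by simp [hS0])
  have hnegB : MF.neg B ∈ m' := hsub (by simp [hS0])
  refine ⟨⟨m', hmax⟩, ⟨?_, B, hboxB, hnot⟩, ?_⟩
  · intro C hC
    have hCs0 : MF.box C ∈ s0 := Finset.mem_filter.2 ⟨hC, rfl⟩
    constructor
    · apply hsub
      simp only [hS0, Finset.mem_insert]
      right; right
      simp only [hT, Finset.mem_union]; right
      simp only [hu, Finset.mem_image]
      exact ⟨MF.box C, hCs0, rfl⟩
    · apply hsub
      simp only [hS0, Finset.mem_insert]
      right; right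
      simp only [hT, Finset.mem_union]; left; exact hCs0
  · intro hBm'
    exact maxcon_not_both hmax hBm' hnegB

end MFAux
namespace MFAux

theorem truth_lemma (G : MF) : ∀ B, B ∈ PhiP G → ∀ m : CWorld G,
    ((canM G).force m B ↔ B ∈ m.1) := by
  intro B
  induction B with
  | var n => intro _ m; exact Iff.rfl
  | fal =>
      intro _ m
      constructor
      · intro h; exact absurd h (by simp [canM, KModel.force])
      · intro h; exact absurd h (maxcon_fal_not_mem m.2)
  | imp C D ihC ihD =>
      intro hmem m
      obtain ⟨hCsub, hDP⟩ := imp_mem_PhiP_components hmem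
      have hCP : C ∈ PhiP G := sub_mem_PhiP hCsub
      have hforce : (canM G).force m (MF.imp C D) ↔
          ((canM G).force m C → (canM G).force m D) := Iff.rfl
      rw [hforce, ihC hCP m, ihD hDP m]
      constructor
      · intro h
        by_cases hCm : C ∈ m.1
        · have hDm := h hCm
          exact maxcon_mem_of_der m.2 hmem (Der_taut (taut_weak C D) (Der_mem hDm))
        · have hnC : MF.neg C ∈ m.1 :=
            maxcon_neg_mem m.2 hCP (neg_mem_PhiP hCsub) hCm
          have : Der m.1 (MF.imp C D) := by
            refine Der_taut ?_ (Der_mem hnC)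
            exact GLPrv.taut (by
              intro v h hf; simp only [MF.neg, h, hf]
              cases v C <;> cases v D <;> rfl)
          exact maxcon_mem_of_der m.2 hmem this
      · intro h hCm
        exact maxcon_mem_of_der m.2 hDP (Der_mp (Der_mem h) (Der_mem hCm))
  | box C ihC =>
      intro hmem m
      have hboxsub : MF.box C ∈ MF.subF G := box_mem_subF_of_PhiP hmem
      have hCP : C ∈ PhiP G := sub_mem_PhiP (sub_of_box_subF hboxsub)
      constructor
      · intro hf
        by_contra hnot
        obtain ⟨m', hR, hCm'⟩ := exists_successor m hboxsub hnot
        exact hCm' ((ihC hCP m').1 (hf m' hR))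
      · intro hmm m' hR
        exact (ihC hCP m').2 (hR.1 C hmm).1

lemma exists_refuting_world {G : MF} (hG : ¬ GLPrv G) :
    ∃ m : CWorld G, ¬ (canM G).force m G := by
  have hcon : Con {MF.neg G} := by
    intro hder
    apply hG
    have h1 : GLPrv (MF.imp (MF.conjFin {MF.neg G}) MF.fal) := hder
    have h2 : MF.conjFin {MF.neg G} = MF.conj (MF.neg G) MF.top := by
      rw [conjFin_eq, Finset.toList_singleton]; rfl
    rw [h2] at h1
    have h3 : GLPrv (MF.imp (MF.imp (MF.conj (MF.neg G) MF.top) MF.fal) G) :=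
      GLPrv.taut (by
        intro v h hf; simp only [MF.conj, MF.neg, MF.top, h, hf]
        cases v G <;> rfl)
    exact GLPrv.mp h3 h1
  have hsub : ({MF.neg G} : Finset MF) ⊆ PhiP G := by
    intro x hx
    rw [Finset.mem_singleton] at hx
    subst hx
    exact neg_mem_PhiP (mem_subF_self G)
  obtain ⟨m, hm1, hm2⟩ := lindenbaum hsub hcon
  refine ⟨⟨m, hm2⟩, ?_⟩
  rw [truth_lemma G G (sub_mem_PhiP (mem_subF_self G)) ⟨m, hm2⟩]
  intro hGm
  exact maxcon_not_both hm2 hGm (hm1 (Finset.mem_singleton_self _))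

instance CWorld_finite (G : MF) : Finite (CWorld G) := by
  have : Finite {t : Finset MF // t ∈ (PhiP G).powerset} := by infer_instance
  refine Finite.of_injective
    (fun m : CWorld G => (⟨m.1, Finset.mem_powerset.2 m.2.1⟩ :
      {t : Finset MF // t ∈ (PhiP G).powerset})) ?_
  intro a b hab
  simp only [Subtype.mk.injEq] at hab
  exact Subtype.ext hab

lemma canR_flip_wf (G : MF) : WellFounded (flip (canR G)) := by
  have ht : Transitive (flip (canR G)) := fun a b c h1 h2 => canR_trans G h2 h1
  have hi : Irreflexive (flip (canR G)) := fun a h => canR_irrefl G a h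
  letI : IsTrans (CWorld G) (flip (canR G)) := ⟨fun a b c h1 h2 => ht h1 h2⟩
  letI : IsIrrefl (CWorld G) (flip (canR G)) := ⟨hi⟩
  exact Finite.wellFounded_of_trans_of_irrefl _

end MFAux
namespace MFAux

open Classical in
lemma force_taut {M : KModel} {w : M.W} {A : MF} (h : MF.TautInst A) : M.force w A := by
  classical
  set v : MF → Bool := fun C => if M.force w C then true else false with hv
  have himp : ∀ B C, v (MF.imp B C) = (!(v B) || v C) := by
    intro B C
    by_cases hB : M.force w B <;> by_cases hC : M.force w C <;>
      simp [hv, hB, hC, KModel.force] <;>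
      first
        | (intro hcon; exact hC (hcon hB))
        | (intro hcon; exact hcon hB)
        | exact fun _ => hC
  have hfal : v MF.fal = false := by simp [hv, KModel.force]; exact @decide_eq_false _ (_) id
  have := h v himp hfal
  by_contra hA
  simp [hv, hA] at this

lemma force_lob {M : KModel} (ht : Transitive M.R) (hwf : WellFounded (flip M.R))
    (A : MF) (w : M.W) : M.force w (MF.imp (MF.box (MF.imp (MF.box A) A)) (MF.box A)) := by
  intro h
  have : ∀ v : M.W, M.R w v → M.force v A := by
    intro v
    induction v using WellFounded.induction hwf with
    | _ v ih =>
        intro hwv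
        have h1 : M.force v (MF.imp (MF.box A) A) := h v hwv
        apply h1
        intro u hu
        exact ih u hu (ht hwv hu)
  exact this

lemma gl_sound {M : KModel} (ht : Transitive M.R) (hwf : WellFounded (flip M.R))
    {A : MF} (h : GLPrv A) : ∀ w, M.force w A := by
  induction h with
  | taut htaut => intro w; exact force_taut htaut
  | k A B => intro w h1 h2 v hv; exact h1 v hv (h2 v hv)
  | lob A => intro w; exact force_lob ht hwf A w
  | mp h1 h2 ih1 ih2 => intro w; exact ih1 w (ih2 w)
  | nec h ih => intro w v hv; exact ih v

lemma subst_boxn (s : ℕ → MF) (C : MF) : ∀ k, MF.subst s (MF.boxn k C) =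
    MF.boxn k (MF.subst s C) := by
  intro k
  induction k with
  | zero => rfl
  | succ k ih => simp [MF.boxn, MF.subst, ih]

lemma subst_dian (s : ℕ → MF) (n : ℕ) :
    MF.subst s (MF.dian n MF.top) = MF.dian n MF.top := by
  simp [MF.dian, MF.neg, MF.top, MF.subst, subst_boxn]

lemma glomega_sound {M : KModel} (ht : Transitive M.R) (hwf : WellFounded (flip M.R))
    {w : M.W} (hdia : ∀ n, M.force w (MF.dian n MF.top))
    {B : MF} (h : GLomegaPrv B) : M.force w B := by
  induction h with
  | gl hgl => exact gl_sound ht hwf hgl w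
  | ax s hA =>
      obtain ⟨n, rfl⟩ := hA
      rw [subst_dian]
      exact hdia n
  | mp h1 h2 ih1 ih2 => exact ih1 ih2

lemma force_conj_elim {M : KModel} {w : M.W} {X Y : MF}
    (h : M.force w (MF.conj X Y)) : M.force w X ∧ M.force w Y := by
  classical
  by_contra hcon
  rw [not_and_or] at hcon
  have : M.force w (MF.imp X (MF.imp Y MF.fal)) := by
    intro hX hY
    rcases hcon with hc | hc
    · exact hc hX
    · exact hc hY
  exact h this

lemma force_listConj_mem {M : KModel} {w : M.W} {x : MF} :
    ∀ {l : List MF}, M.force w (listConj l) → x ∈ l → M.force w x := by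
  intro l
  induction l with
  | nil => intro _ hx; simp at hx
  | cons a l ih =>
      intro h hx
      obtain ⟨h1, h2⟩ := force_conj_elim h
      rcases List.mem_cons.1 hx with hx | hx
      · subst hx; exact h1
      · exact ih h2 hx

lemma force_conjFin_mem {M : KModel} {w : M.W} {s : Finset MF} {x : MF}
    (h : M.force w (MF.conjFin s)) (hx : x ∈ s) : M.force w x :=
  force_listConj_mem h (Finset.mem_toList.2 hx)

end MFAux
namespace MFAux

section Merged

variable (M1 M2 : KModel) (d : M1.W) (e : M2.W)

def S1 : Type := {w : M1.W // w = d ∨ M1.R d w}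
def S2 : Type := {w : M2.W // w = e ∨ M2.R e w}

def MW : Type := Unit ⊕ (S1 M1 d ⊕ (S2 M2 e ⊕ ℕ))

def MR : MW M1 M2 d e → MW M1 M2 d e → Prop
  | Sum.inl _, x => x ≠ Sum.inl ()
  | Sum.inr (Sum.inl w), Sum.inr (Sum.inl w') => M1.R w.1 w'.1
  | Sum.inr (Sum.inr (Sum.inl w)), Sum.inr (Sum.inr (Sum.inl w')) => M2.R w.1 w'.1
  | Sum.inr (Sum.inr (Sum.inr _)), Sum.inr (Sum.inr (Sum.inl w')) => M2.R e w'.1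
  | Sum.inr (Sum.inr (Sum.inr n)), Sum.inr (Sum.inr (Sum.inr m)) => m < n
  | _, _ => False

def Mval : MW M1 M2 d e → ℕ → Prop
  | Sum.inl _, _ => False
  | Sum.inr (Sum.inl w), k => M1.val w.1 k
  | Sum.inr (Sum.inr (Sum.inl w)), k => M2.val w.1 k
  | Sum.inr (Sum.inr (Sum.inr _)), k => M2.val e k

def MM : KModel := ⟨MW M1 M2 d e, MR M1 M2 d e, Mval M1 M2 d e⟩

variable {M1 M2 d e}

lemma MR_trans (ht1 : Transitive M1.R) (ht2 : Transitive M2.R) :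
    Transitive (MR M1 M2 d e) := by
  rintro (a | a | a | a) (b | b | b | b) (c | c | c | c) hab hbc <;>
    simp only [MR, ne_eq] at * <;>
    first
      | exact ht1 hab hbc
      | exact ht2 hab hbc
      | omega
      | exact hab
      | exact hbc
      | simp
      | (intro h; cases h)
      | skip

lemma MR_irrefl (hi1 : Irreflexive M1.R) (hi2 : Irreflexive M2.R) :
    Irreflexive (MR M1 M2 d e) := by
  rintro (a | a | a | a) h <;> simp only [MR] at h
  · exact h rfl
  · exact hi1 a.1 h
  · exact hi2 a.1 h
  · omega

end Merged

end MFAux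
namespace MFAux

section Merged2

variable (M1 M2 : KModel) (d : M1.W) (e : M2.W)

def rootW : MW M1 M2 d e := Sum.inl ()
def emb1 (w : S1 M1 d) : MW M1 M2 d e := Sum.inr (Sum.inl w)
def emb2 (w : S2 M2 e) : MW M1 M2 d e := Sum.inr (Sum.inr (Sum.inl w))
def chainW (n : ℕ) : MW M1 M2 d e := Sum.inr (Sum.inr (Sum.inr n))

variable {M1 M2 d e}

lemma force_S1 (ht1 : Transitive M1.R) : ∀ (B : MF) (w : S1 M1 d),
    ((MM M1 M2 d e).force (emb1 M1 M2 d e w) B ↔ M1.force w.1 B) := by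
  intro B
  induction B with
  | var n => intro w; exact Iff.rfl
  | fal => intro w; exact Iff.rfl
  | imp C D ihC ihD => intro w; exact imp_congr (ihC w) (ihD w)
  | box C ihC =>
      intro w
      constructor
      · intro h v hv
        have hvS : v = d ∨ M1.R d v := by
          rcases w.2 with hw | hw
          · rw [hw] at hv; exact Or.inr hv
          · exact Or.inr (ht1 hw hv)
        exact (ihC ⟨v, hvS⟩).1 (h (emb1 M1 M2 d e ⟨v, hvS⟩) hv)
      · intro h v hv
        rcases v with v | v | v | v
        · exact absurd hv (by simp [MM, MR, emb1])
        · exact (ihC v).2 (h v.1 hv)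
        · exact absurd hv (by simp [MM, MR, emb1])
        · exact absurd hv (by simp [MM, MR, emb1])

lemma force_S2 (ht2 : Transitive M2.R) : ∀ (B : MF) (w : S2 M2 e),
    ((MM M1 M2 d e).force (emb2 M1 M2 d e w) B ↔ M2.force w.1 B) := by
  intro B
  induction B with
  | var n => intro w; exact Iff.rfl
  | fal => intro w; exact Iff.rfl
  | imp C D ihC ihD => intro w; exact imp_congr (ihC w) (ihD w)
  | box C ihC =>
      intro w
      constructor
      · intro h v hv
        have hvS : v = e ∨ M2.R e v := by
          rcases w.2 with hw | hw
          · rw [hw] at hv; exact Or.inr hv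
          · exact Or.inr (ht2 hw hv)
        exact (ihC ⟨v, hvS⟩).1 (h (emb2 M1 M2 d e ⟨v, hvS⟩) hv)
      · intro h v hv
        rcases v with v | v | v | v
        · exact absurd hv (by simp [MM, MR, emb2])
        · exact absurd hv (by simp [MM, MR, emb2])
        · exact (ihC v).2 (h v.1 hv)
        · exact absurd hv (by simp [MM, MR, emb2])

lemma imp_mem_subF_components {G C D : MF} (h : MF.imp C D ∈ MF.subF G) :
    C ∈ MF.subF G ∧ D ∈ MF.subF G := by
  have hC : C ∈ MF.subF (MF.imp C D) := by
    simp [MF.subF]; right; left; exact mem_subF_self C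
  have hD : D ∈ MF.subF (MF.imp C D) := by
    simp [MF.subF]; right; right; exact mem_subF_self D
  exact ⟨subF_closed G _ h hC, subF_closed G _ h hD⟩

lemma force_chain (ht2 : Transitive M2.R) (A : MF)
    (he_rf : ∀ C, MF.box C ∈ MF.subF (MF.box A) →
      M2.force e (MF.imp (MF.box C) C)) :
    ∀ B, B ∈ MF.subF (MF.box A) → ∀ n : ℕ,
      ((MM M1 M2 d e).force (chainW M1 M2 d e n) B ↔ M2.force e B) := by
  intro B
  induction B with
  | var k => intro _ n; exact Iff.rfl
  | fal => intro _ n; exact Iff.rfl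
  | imp C D ihC ihD =>
      intro hmem n
      obtain ⟨hC, hD⟩ := imp_mem_subF_components hmem
      exact imp_congr (ihC hC n) (ihD hD n)
  | box C ihC =>
      intro hmem n
      have hCsub : C ∈ MF.subF (MF.box A) := sub_of_box_subF hmem
      constructor
      · intro h v hv
        have hvS : v = e ∨ M2.R e v := Or.inr hv
        exact (force_S2 ht2 C ⟨v, hvS⟩).1 (h (emb2 M1 M2 d e ⟨v, hvS⟩) hv)
      · intro h v hv
        rcases v with v | v | v | v
        · exact absurd hv (by simp [MM, MR, chainW])
        · exact absurd hv (by simp [MM, MR, chainW])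
        · exact (force_S2 ht2 C v).2 (h v.1 hv)
        · -- chain element: v < n; use Rf to get e ⊩ C
          have heC : M2.force e C := he_rf C hmem h
          exact (ihC hCsub v).2 heC

lemma acc_of_flip_wf {α : Type} {r : α → α → Prop} (h : WellFounded (flip r)) :
    Irreflexive r := by
  intro a ha
  have hacc := h.apply a
  induction hacc with
  | intro x h ih => exact ih x ha ha

lemma MR_wf (hwf1 : WellFounded (flip M1.R)) (hwf2 : WellFounded (flip M2.R)) :
    WellFounded (flip (MR M1 M2 d e)) := by
  have acc2 : ∀ w : M2.W, ∀ h : w = e ∨ M2.R e w,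
      Acc (flip (MR M1 M2 d e)) (emb2 M1 M2 d e ⟨w, h⟩) := by
    intro w
    induction w using WellFounded.induction hwf2 with
    | _ w ih =>
        intro h
        constructor
        rintro (y | y | y | y) hy
        · exact absurd hy (by simp [MR, emb2, flip])
        · exact absurd hy (by simp [MR, emb2, flip])
        · exact ih y.1 hy y.2
        · exact absurd hy (by simp [MR, emb2, flip])
  have acc1 : ∀ w : M1.W, ∀ h : w = d ∨ M1.R d w,
      Acc (flip (MR M1 M2 d e)) (emb1 M1 M2 d e ⟨w, h⟩) := by
    intro w
    induction w using WellFounded.induction hwf1 with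
    | _ w ih =>
        intro h
        constructor
        rintro (y | y | y | y) hy
        · exact absurd hy (by simp [MR, emb1, flip])
        · exact ih y.1 hy y.2
        · exact absurd hy (by simp [MR, emb1, flip])
        · exact absurd hy (by simp [MR, emb1, flip])
  have accC : ∀ n : ℕ, Acc (flip (MR M1 M2 d e)) (chainW M1 M2 d e n) := by
    intro n
    induction n using Nat.strong_induction_on with
    | _ n ih =>
        constructor
        rintro (y | y | y | y) hy
        · exact absurd hy (by simp [MR, chainW, flip])
        · exact absurd hy (by simp [MR, chainW, flip])
        · exact acc2 y.1 y.2
        · exact ih y hy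
  constructor
  rintro (x | x | x | x)
  · constructor
    rintro (y | y | y | y) hy
    · exact absurd hy (by simp [MR, flip]; cases y; rfl)
    · exact acc1 y.1 y.2
    · exact acc2 y.1 y.2
    · exact accC y
  · exact acc1 x.1 x.2
  · exact acc2 x.1 x.2
  · exact accC x

lemma force_negtop_false (M : KModel) (w : M.W) : ¬ M.force w (MF.neg MF.top) :=
  fun h => h (fun x => x)

lemma chain_not_boxn :
    ∀ n, ¬ (MM M1 M2 d e).force (chainW M1 M2 d e n) (MF.boxn n (MF.neg MF.top)) := by
  intro n
  induction n with
  | zero => exact force_negtop_false _ _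
  | succ n ih =>
      intro h
      exact ih (h (chainW M1 M2 d e n) (Nat.lt_succ_self n))

lemma root_dian (n : ℕ) :
    (MM M1 M2 d e).force (rootW M1 M2 d e) (MF.dian n MF.top) := by
  intro h
  cases n with
  | zero => exact force_negtop_false _ _ h
  | succ n =>
      exact chain_not_boxn n
        (h (chainW M1 M2 d e n) (by simp [MM, MR, rootW, chainW]; intro h; cases h))

lemma merged_model (A : MF)
    (ht1 : Transitive M1.R) (hwf1 : WellFounded (flip M1.R))
    (ht2 : Transitive M2.R) (hwf2 : WellFounded (flip M2.R))
    (hd_box : M1.force d (MF.box A)) (hd_notA : ¬ M1.force d A)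
    (he_box : M2.force e (MF.box A))
    (he_rf : ∀ C, MF.box C ∈ MF.subF (MF.box A) →
      M2.force e (MF.imp (MF.box C) C)) :
    ∃ (M : KModel) (w : M.W),
      Transitive M.R ∧ Irreflexive M.R ∧ (∀ x, x ≠ w → M.R w x) ∧
      (∀ n, M.force w (MF.dian n MF.top)) ∧
      M.force w (MF.box (MF.box A)) ∧ ¬ M.force w (MF.box A) ∧
      WellFounded (flip M.R) := by
  refine ⟨MM M1 M2 d e, rootW M1 M2 d e, MR_trans ht1 ht2,
    MR_irrefl (acc_of_flip_wf hwf1) (acc_of_flip_wf hwf2), ?_, root_dian, ?_, ?_,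
    MR_wf hwf1 hwf2⟩
  · rintro (x | x | x | x) hx
    · exact absurd rfl hx
    · exact (by simp [MM, MR, rootW, emb1]; intro h; (cases h) : (MM M1 M2 d e).R (rootW M1 M2 d e) (emb1 M1 M2 d e x))
    · exact (by simp [MM, MR, rootW, emb2]; intro h; (cases h) : (MM M1 M2 d e).R (rootW M1 M2 d e) (emb2 M1 M2 d e x))
    · exact (by simp [MM, MR, rootW, chainW]; intro h; (cases h) : (MM M1 M2 d e).R (rootW M1 M2 d e) (chainW M1 M2 d e x))
  · -- forces □□A
    rintro (v | v | v | v) hv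
    · exact absurd rfl hv
    · refine (force_S1 ht1 (MF.box A) v).2 ?_
      rcases v.2 with hw | hw
      · rw [hw]; exact hd_box
      · intro u hu
        exact hd_box u (ht1 hw hu)
    · refine (force_S2 ht2 (MF.box A) v).2 ?_
      rcases v.2 with hw | hw
      · rw [hw]; exact he_box
      · intro u hu
        exact he_box u (ht2 hw hu)
    · exact (force_chain ht2 A he_rf (MF.box A) (mem_subF_self _) v).2 he_box
  · -- does not force □A
    intro h
    have hd : (MM M1 M2 d e).force (emb1 M1 M2 d e ⟨d, Or.inl rfl⟩) A :=
      h (emb1 M1 M2 d e ⟨d, Or.inl rfl⟩) (by simp [MM, MR, rootW, emb1]; intro h; cases h)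
    exact hd_notA ((force_S1 ht1 A ⟨d, Or.inl rfl⟩).1 hd)

end Merged2

end MFAux

/-- if `GL ⊬ A` and `GL ⊬ ⋀Rf(□A) → ¬□A`, then there is a
transitive irreflexive Kripke model with a root forcing every `◇ⁿ⊤` and `□□A`
but not `□A`; consequently `GL_ω ⊬ □□A → □A`. -/
theorem nontrifling_of_unprovable (A : MF)
    (h1 : ¬ GLPrv A)
    (h2 : ¬ GLPrv (MF.imp (MF.conjFin (MF.RfSet (MF.box A))) (MF.neg (MF.box A)))) :
    (∃ (M : KModel) (w : M.W),
      Transitive M.R ∧ Irreflexive M.R ∧ (∀ x, x ≠ w → M.R w x) ∧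
      (∀ n, M.force w (MF.dian n MF.top)) ∧
      M.force w (MF.box (MF.box A)) ∧ ¬ M.force w (MF.box A)) ∧
    ¬ GLomegaPrv (MF.imp (MF.box (MF.box A)) (MF.box A)) := by
  classical
  -- Model 1: a world forcing □A but not A, from GL ⊬ □A → A (Löb's rule).
  have hG1 : ¬ GLPrv (MF.imp (MF.box A) A) := by
    intro h
    exact h1 (GLPrv.mp h (GLPrv.mp (GLPrv.lob A) (GLPrv.nec h)))
  obtain ⟨d, hd⟩ := MFAux.exists_refuting_world hG1
  have hd' : ¬ ((MFAux.canM (MF.imp (MF.box A) A)).force d (MF.box A) →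
      (MFAux.canM (MF.imp (MF.box A) A)).force d A) := hd
  have hd_box : (MFAux.canM (MF.imp (MF.box A) A)).force d (MF.box A) := by
    by_contra hc
    exact hd' (fun hb => absurd hb hc)
  have hd_notA : ¬ (MFAux.canM (MF.imp (MF.box A) A)).force d A :=
    fun hA => hd' (fun _ => hA)
  -- Model 2: a world forcing ⋀Rf(□A) and □A.
  set G2 := MF.imp (MF.conjFin (MF.RfSet (MF.box A))) (MF.neg (MF.box A)) with hG2def
  obtain ⟨e, he⟩ := MFAux.exists_refuting_world h2
  have he' : ¬ ((MFAux.canM G2).force e (MF.conjFin (MF.RfSet (MF.box A))) →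
      (MFAux.canM G2).force e (MF.neg (MF.box A))) := he
  have he_conj : (MFAux.canM G2).force e (MF.conjFin (MF.RfSet (MF.box A))) := by
    by_contra hc
    exact he' (fun hb => absurd hb hc)
  have he_nb : ¬ (MFAux.canM G2).force e (MF.neg (MF.box A)) :=
    fun hnb => he' (fun _ => hnb)
  have he_box : (MFAux.canM G2).force e (MF.box A) := by
    by_contra hc
    have : (MFAux.canM G2).force e (MF.neg (MF.box A)) := fun hb => absurd hb hc
    exact he_nb this
  have he_rf : ∀ C, MF.box C ∈ MF.subF (MF.box A) →
      (MFAux.canM G2).force e (MF.imp (MF.box C) C) := by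
    intro C hC
    refine MFAux.force_conjFin_mem he_conj ?_
    refine Finset.mem_image.2 ⟨MF.box C, Finset.mem_filter.2 ⟨hC, rfl⟩, rfl⟩
  obtain ⟨M, w, htr, hirr, hroot, hdia, hbb, hnb, hwf⟩ :=
    MFAux.merged_model A (MFAux.canR_trans _) (MFAux.canR_flip_wf _)
      (MFAux.canR_trans _) (MFAux.canR_flip_wf _) hd_box hd_notA he_box he_rf
  refine ⟨⟨M, w, htr, hirr, hroot, hdia, hbb, hnb⟩, ?_⟩
  intro hprv
  have hsound := MFAux.glomega_sound htr hwf hdia hprv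
  exact hnb (hsound hbb)
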